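/- If B : X → ℝ is a differentiable barrier function for the dynamical system ẋ = f(x,d) such that B(x) ≤ 0 for all x in the initial set X₀, B(x) > 0 for all x in the unsafe set Xᵤ, and for all x ∈ X and d ∈ D, B(x) = 0 implies ⟨∇B(x), f(x,d)⟩ < 0, then every solution x(t) of the ODE with x(0) ∈ X₀ and constant disturbance d ∈ D satisfies B(x(t)) ≤ 0 for all t ≥ 0; in particular x(t) never enters Xᵤ. -/

import Mathlib

/-- Barrier certificate theorem (Theorem 1 / safety of trajectories):
if `B ≤ 0` on `X₀`, `B > 0` on `Xᵤ`, and `B x = 0` implies `⟪∇B x, f x d⟫ < 0`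
on `X × D`, then any solution starting in `X₀` with constant disturbance
`d ∈ D` satisfies `B (x t) ≤ 0` for all `t ≥ 0`, hence never enters `Xᵤ`. -/
theorem stmt_0 {n k : ℕ}
    (X X₀ Xu : Set (EuclideanSpace ℝ (Fin n)))
    (D : Set (EuclideanSpace ℝ (Fin k)))
    (f : EuclideanSpace ℝ (Fin n) → EuclideanSpace ℝ (Fin k) → EuclideanSpace ℝ (Fin n))
    (B : EuclideanSpace ℝ (Fin n) → ℝ)
    (gradB : EuclideanSpace ℝ (Fin n) → EuclideanSpace ℝ (Fin n))
    (hX₀ : X₀ ⊆ X) (hXu : Xu ⊆ X)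
    (hB : ∀ x, HasGradientAt B (gradB x) x)
    (hinit : ∀ x ∈ X₀, B x ≤ 0)
    (hunsafe : ∀ x ∈ Xu, B x > 0)
    (hborder : ∀ x ∈ X, ∀ d ∈ D, B x = 0 → inner ℝ (gradB x) (f x d) < (0 : ℝ))
    (x : ℝ → EuclideanSpace ℝ (Fin n)) (d : EuclideanSpace ℝ (Fin k))
    (hd : d ∈ D) (hx0 : x 0 ∈ X₀)
    (hxX : ∀ t ≥ (0 : ℝ), x t ∈ X)
    (hode : ∀ t ≥ (0 : ℝ), HasDerivAt x (f (x t) d) t) :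
    ∀ t ≥ (0 : ℝ), B (x t) ≤ 0 ∧ x t ∉ Xu := by
  set g : ℝ → ℝ := fun t => B (x t) with hg_def
  have hg : ∀ t ≥ (0 : ℝ), HasDerivAt g (inner ℝ (gradB (x t)) (f (x t) d)) t := by
    intro t ht
    have h1 : HasFDerivAt B (InnerProductSpace.toDual ℝ _ (gradB (x t))) (x t) := hB (x t)
    have := h1.comp_hasDerivAt t (hode t ht)
    exact this
  have key : ∀ t ≥ (0 : ℝ), g t ≤ 0 := by
    intro T hT
    by_contra hgT
    push_neg at hgT
    set S : Set ℝ := {t | t ∈ Set.Icc (0 : ℝ) T ∧ g t ≤ 0} with hS_def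
    have hS0 : (0 : ℝ) ∈ S := ⟨⟨le_refl _, hT⟩, hinit _ hx0⟩
    have hSne : S.Nonempty := ⟨0, hS0⟩
    have hSbdd : BddAbove S := ⟨T, fun t ht => ht.1.2⟩
    set s := sSup S with hs_def
    have hs0 : (0 : ℝ) ≤ s := le_csSup hSbdd hS0
    have hsT : s ≤ T := csSup_le hSne (fun t ht => ht.1.2)
    have hcont : ContinuousAt g s := (hg s hs0).continuousAt
    -- g s ≤ 0
    have hgs_le : g s ≤ 0 := by
      have hcl : s ∈ closure S := csSup_mem_closure hSne hSbdd
      haveI hne : (nhdsWithin s S).NeBot := mem_closure_iff_nhdsWithin_neBot.mp hcl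
      refine le_of_tendsto ((hcont.continuousWithinAt : ContinuousWithinAt g S s).tendsto) ?_
      filter_upwards [self_mem_nhdsWithin] with t ht using ht.2
    have hsT' : s < T := lt_of_le_of_ne hsT (by
      intro h; rw [h] at hgs_le; exact absurd hgs_le (not_le.mpr hgT))
    -- eventually g < 0 to the right of s
    have hev : ∀ᶠ t in nhdsWithin s (Set.Ioi s), g t < 0 := by
      rcases lt_or_eq_of_le hgs_le with hlt | heq
      · have : ∀ᶠ t in nhds s, g t < 0 := hcont.tendsto.eventually_lt_const (by exact hlt) |>.mono (fun t h => h)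
        exact this.filter_mono nhdsWithin_le_nhds
      · -- g s = 0, use negative derivative
        have hxs : x s ∈ X := hxX s hs0
        have hneg : inner ℝ (gradB (x s)) (f (x s) d) < (0 : ℝ) :=
          hborder _ hxs d hd heq
        have hslope := hasDerivAt_iff_tendsto_slope.mp (hg s hs0)
        have hslope_neg : ∀ᶠ t in nhdsWithin s {s}ᶜ, slope g s t < 0 :=
          hslope.eventually_lt_const hneg
        have hsub : nhdsWithin s (Set.Ioi s) ≤ nhdsWithin s {s}ᶜ :=
          nhdsWithin_mono s (fun t ht => ne_of_gt ht)
        filter_upwards [hslope_neg.filter_mono hsub, self_mem_nhdsWithin] with t ht hts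
        have hts' : (0 : ℝ) < t - s := sub_pos.mpr hts
        have : slope g s t = (g t - g s) / (t - s) := by
          simp [slope, div_eq_inv_mul]
        rw [this, heq, sub_zero] at ht
        rcases div_neg_iff.mp ht with ⟨_, h⟩ | ⟨h, _⟩
        · linarith
        · exact h
    have hevT : ∀ᶠ t in nhdsWithin s (Set.Ioi s), t < T := by
      have : Set.Iio T ∈ nhds s := Iio_mem_nhds hsT'
      exact Filter.eventually_iff_exists_mem.mpr ⟨Set.Iio T, nhdsWithin_le_nhds this, fun t ht => ht⟩
    obtain ⟨t, ⟨hgt, htT⟩, hst⟩ :=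
      ((hev.and hevT).and self_mem_nhdsWithin).exists
    have hst : s < t := hst
    have : t ∈ S := ⟨⟨le_of_lt (lt_of_le_of_lt hs0 hst), le_of_lt htT⟩, le_of_lt hgt⟩
    exact absurd (le_csSup hSbdd this) (not_le.mpr hst)
  intro t ht
  refine ⟨key t ht, fun hmem => ?_⟩
  exact absurd (key t ht) (not_le.mpr (hunsafe _ hmem))
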